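/- Let h : {1,…,n} → {1,…,n} be a Hessenberg function and let I_h be the ideal of ℚ[x_1,…,x_n,t] generated by f_{h(1),1}, f_{h(2),2}, …, f_{h(n),n}. Then for every j ∈ {1,…,n} and every i with h(j) ≤ i ≤ n, the polynomial f_{i,j} lies in I_h. Consequently, if h and h′ are Hessenberg functions with h(j) ≤ h′(j) for all j, then I_{h′} ⊆ I_h. -/

import Mathlib

/-- A Hessenberg function `h : {1,…,n} → {1,…,n}`. -/
def IsHessenberg (n : ℕ) (h : ℕ → ℕ) : Prop :=
  (∀ i, 1 ≤ i → i ≤ n → i ≤ h i ∧ h i ≤ n) ∧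
  (∀ i, 1 ≤ i → i + 1 ≤ n → h i ≤ h (i + 1))

/-- The variable `x_k` (for `1 ≤ k ≤ n`) in `ℚ[x_1,…,x_n,t]`, realized as
`MvPolynomial (Fin (n+1)) ℚ` where the variable of index `0` is `t` and the variable
of index `k` (for `1 ≤ k ≤ n`) is `x_k`. -/
noncomputable def xv (n k : ℕ) : MvPolynomial (Fin (n + 1)) ℚ :=
  if h : k ≤ n then MvPolynomial.X ⟨k, Nat.lt_succ_of_le h⟩ else 0

/-- The variable `t` in `ℚ[x_1,…,x_n,t]`. -/
noncomputable def tv (n : ℕ) : MvPolynomial (Fin (n + 1)) ℚ :=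
  MvPolynomial.X 0

/-- `p_i := Σ_{k=1}^{i} (x_k − k·t)`, with `p_0 = 0`. -/
noncomputable def pp (n i : ℕ) : MvPolynomial (Fin (n + 1)) ℚ :=
  ∑ k ∈ Finset.Icc 1 i, (xv n k - (k : MvPolynomial (Fin (n + 1)) ℚ) * tv n)

/-- The polynomials `f_{i,j}`: `f_{j,j} = p_j`, `f_{i,0} = 0`, and
`f_{i,j} = f_{i−1,j−1} + (x_j − x_i − t)·f_{i−1,j}` for `i > j ≥ 1`. -/
noncomputable def ff (n : ℕ) : ℕ → ℕ → MvPolynomial (Fin (n + 1)) ℚ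
  | _, 0 => 0
  | 0, _ + 1 => 0
  | i + 1, j + 1 =>
    if i + 1 = j + 1 then pp n (j + 1)
    else ff n i j + (xv n (j + 1) - xv n (i + 1) - tv n) * ff n i (j + 1)

/-- The ideal `I_h` of `ℚ[x_1,…,x_n,t]` generated by `f_{h(1),1},…,f_{h(n),n}`. -/
noncomputable def Ih (n : ℕ) (h : ℕ → ℕ) : Ideal (MvPolynomial (Fin (n + 1)) ℚ) :=
  Ideal.span ((fun j => ff n (h j) j) '' Set.Icc 1 n)

lemma ff_zero (n i : ℕ) : ff n i 0 = 0 := by cases i <;> rfl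

lemma ff_succ (n i j : ℕ) (hij : j < i) :
    ff n (i + 1) (j + 1) =
      ff n i j + (xv n (j + 1) - xv n (i + 1) - tv n) * ff n i (j + 1) := by
  rw [ff, if_neg (by omega)]

theorem stmt5 (n : ℕ) (h : ℕ → ℕ) (hh : IsHessenberg n h) :
    (∀ j, 1 ≤ j → j ≤ n → ∀ i, h j ≤ i → i ≤ n → ff n i j ∈ Ih n h) ∧
    (∀ h' : ℕ → ℕ, IsHessenberg n h' → (∀ j, 1 ≤ j → j ≤ n → h j ≤ h' j) →
      Ih n h' ≤ Ih n h) := by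
  have key : ∀ j, 1 ≤ j → j ≤ n → ∀ i, h j ≤ i → i ≤ n → ff n i j ∈ Ih n h := by
    intro j
    induction j with
    | zero => omega
    | succ j ih =>
      intro _ hjn i hi
      induction i, hi using Nat.le_induction with
      | base =>
        intro _
        exact Ideal.subset_span ⟨j + 1, ⟨by omega, hjn⟩, rfl⟩
      | succ i hi ih2 =>
        intro hin
        have hji : j + 1 ≤ i := le_trans (hh.1 (j + 1) (by omega) hjn).1 hi
        rw [ff_succ n i j (by omega)]
        have hmem : ff n i (j + 1) ∈ Ih n h := ih2 (by omega)
        rcases Nat.eq_zero_or_pos j with hj0 | hj1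
        · subst hj0
          rw [ff_zero]
          rw [zero_add]
          exact Ideal.mul_mem_left _ _ hmem
        · have hj' : h j ≤ i := le_trans (hh.2 j hj1 hjn) hi
          exact (Ih n h).add_mem (ih hj1 (by omega) i hj' (by omega))
            (Ideal.mul_mem_left _ _ hmem)
  refine ⟨key, ?_⟩
  intro h' hh' hle
  rw [Ih, Ideal.span_le]
  rintro _ ⟨j, ⟨hj1, hjn⟩, rfl⟩
  exact key j hj1 hjn (h' j) (hle j hj1 hjn) (hh'.1 j hj1 hjn).2
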